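/- If P = (y+2m, y | b_1,...,b_n | -y) is an Ulrich partition of type (2,n,1) of dimension 2y + m - 1, then its elongation E(P) is an Ulrich partition of type (2, n+2m, 1) of dimension 2(y+3m) + m - 1. Consequently E^k(F_m) is Ulrich of type (2, 2mk + m - 1, 1) for all k ≥ 0. -/

import Mathlib

/-- A list of integers is strictly decreasing. -/
def StrictDec (l : List ℤ) : Prop := l.Chain' (· > ·)

/-- Time evolution of a three-block partition `(A | B | C)`: subtract `t` from each entry of
the first block, keep the middle block fixed, add `t` to each entry of the last block. -/
def evolve3 (A B C : List ℤ) (t : ℤ) : List ℤ := A.map (· - t) ++ B ++ C.map (· + t)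

/-- A list has exactly one repeated entry: the number of distinct values is one less
than the length. -/
def OneRepeat (l : List ℤ) : Prop := l.toFinset.card + 1 = l.length

/-- The dimension of a three-block partition of type `(α, β, γ)` is `αβ + αγ + βγ`. -/
def dim3 (A B C : List ℤ) : ℕ := A.length * B.length + A.length * C.length + B.length * C.length

/-- A three-block partition is Ulrich: it is a strictly decreasing sequence (with nonempty
outer blocks), and for every time `t ∈ {1, ..., N}` (N the dimension) the evolved list `P(t)`
has exactly one repeated entry. -/
def IsUlrich3 (A B C : List ℤ) : Prop :=
  A ≠ [] ∧ C ≠ [] ∧ StrictDec (evolve3 A B C 0) ∧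
    ∀ t : ℕ, 1 ≤ t → t ≤ dim3 A B C → OneRepeat (evolve3 A B C (t : ℤ))
/-- The middle block of the fundamental pattern `F_m = (3m, m | m-1, ..., 1 | -m)`. -/
def Fb (m : ℕ) : List ℤ := (List.range (m - 1)).map (fun i => (m : ℤ) - 1 - i)

/-- Middle block of the elongation of `(y+2m, y | b | -y)`: insert the contiguous block
`y+3m-1, ..., y+2m` before `b` and the contiguous block `-y-m, ..., -y-2m+1` after it. -/
def elongB (y : ℤ) (m : ℕ) (b : List ℤ) : List ℤ :=
  ((List.range m).map (fun i => y + 3 * m - 1 - i)) ++ b ++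
    ((List.range m).map (fun i => -y - m - i))

/-- The value of `y` for the `k`-th elongation `E^k(F_m)`: `y = m + 3mk`. -/
def yk (m k : ℕ) : ℤ := (m : ℤ) + 3 * m * k

/-- The middle block of `E^k(F_m)`. -/
def EkB (m : ℕ) : ℕ → List ℤ
  | 0 => Fb m
  | k + 1 => elongB (yk m k) m (EkB m k)

/-- The first block of `E^k(F_m)`. -/
def EkA (m k : ℕ) : List ℤ := [yk m k + 2 * m, yk m k]

/-- The last block of `E^k(F_m)`. -/
def EkC (m k : ℕ) : List ℤ := [-(yk m k)]

/-! ### Auxiliary lemmas -/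

def blk (a : ℤ) (m : ℕ) : List ℤ := (List.range m).map (fun i : ℕ => a - (i : ℤ))

lemma flatMap_cast (l : List ℕ) : (l.flatMap fun (a : ℕ) => [(a:ℤ)]) = l.map (fun a : ℕ => (a:ℤ)) := by
  induction l with
  | nil => rfl
  | cons a l ih => simp [ih]

lemma mem_blk {x a : ℤ} {m : ℕ} : x ∈ blk a m ↔ a - m < x ∧ x ≤ a := by
  simp only [blk, List.mem_map, List.mem_range]
  constructor
  · rintro ⟨i, h, rfl⟩; omega
  · intro h; exact ⟨(a - x).toNat, by omega, by omega⟩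

lemma pairwise_blk {a : ℤ} {m : ℕ} : (blk a m).Pairwise (· > ·) := by
  rw [blk, List.pairwise_map]
  refine (List.pairwise_lt_range (n := m)).imp ?_
  intro i j h
  simp only [gt_iff_lt]
  omega

lemma nodup_blk {a : ℤ} {m : ℕ} : (blk a m).Nodup := pairwise_blk.imp ne_of_gt

lemma length_blk {a : ℤ} {m : ℕ} : (blk a m).length = m := by
  rw [blk, List.length_map, List.length_range]

lemma elongB_eq (y : ℤ) (m : ℕ) (b : List ℤ) :
    elongB y m b = blk (y + 3 * m - 1) m ++ b ++ blk (-y - m) m := by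
  simp [elongB, blk, flatMap_cast, List.map_map]
  rfl

lemma Fb_eq (m : ℕ) : Fb m = blk ((m : ℤ) - 1) (m - 1) := by
  simp [Fb, blk, flatMap_cast, List.map_map]

lemma evolve_pair (a b c t : ℤ) (B : List ℤ) :
    evolve3 [a, b] B [c] t = [a - t, b - t] ++ B ++ [c + t] := by
  simp [evolve3]

lemma dim_eq (a b c : ℤ) (L : List ℤ) : dim3 [a, b] L [c] = 3 * L.length + 2 := by
  simp [dim3]; ring

lemma length_elongB (y : ℤ) (m : ℕ) (b : List ℤ) :
    (elongB y m b).length = m + b.length + m := by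
  rw [elongB_eq]; simp [length_blk]; omega

lemma toFinset_shape (u v w : ℤ) (M : List ℤ) :
    ([u, v] ++ M ++ [w]).toFinset = insert u (insert v (insert w M.toFinset)) := by
  ext x; simp [List.toFinset_append]

lemma length_shape (u v w : ℤ) (M : List ℤ) :
    ([u, v] ++ M ++ [w]).length = M.length + 3 := by
  simp [List.length_append]

lemma card_calc {u v w : ℤ} {M : List ℤ}
    (h : (insert u (insert v (insert w M.toFinset))).card = M.length + 2) :
    OneRepeat ([u, v] ++ M ++ [w]) := by
  rw [OneRepeat, toFinset_shape, length_shape, h]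

lemma shapeA {u v w : ℤ} {M : List ℤ} (hM : M.Nodup) (hv : v ∈ M) (hu : u ∉ M)
    (hw : w ∉ M) (huw : u ≠ w) : OneRepeat ([u, v] ++ M ++ [w]) := by
  apply card_calc
  have h1 : insert v (insert w M.toFinset) = insert w M.toFinset := by
    apply Finset.insert_eq_self.2; simp [hv]
  rw [h1, Finset.card_insert_of_notMem (by simp [hu, huw]),
    Finset.card_insert_of_notMem (by simp [hw]), List.toFinset_card_of_nodup hM]

lemma shapeB {u v w : ℤ} {M : List ℤ} (hM : M.Nodup) (hu : u ∈ M) (hv : v ∉ M)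
    (hw : w ∉ M) (hvw : v ≠ w) : OneRepeat ([u, v] ++ M ++ [w]) := by
  apply card_calc
  have h1 : insert u (insert v (insert w M.toFinset)) = insert v (insert w M.toFinset) := by
    apply Finset.insert_eq_self.2; simp [hu]
  rw [h1, Finset.card_insert_of_notMem (by simp [hv, hvw]),
    Finset.card_insert_of_notMem (by simp [hw]), List.toFinset_card_of_nodup hM]

lemma shapeC {u v w : ℤ} {M : List ℤ} (hM : M.Nodup) (hw : w ∈ M) (hu : u ∉ M)
    (hv : v ∉ M) (huv : u ≠ v) : OneRepeat ([u, v] ++ M ++ [w]) := by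
  apply card_calc
  have h1 : insert w M.toFinset = M.toFinset := by
    apply Finset.insert_eq_self.2; simp [hw]
  rw [h1, Finset.card_insert_of_notMem (by simp [hu, huv]),
    Finset.card_insert_of_notMem (by simp [hv]), List.toFinset_card_of_nodup hM]

lemma shapeD {u v w : ℤ} {M : List ℤ} (hM : M.Nodup) (huw : u = w) (hu : u ∉ M)
    (hv : v ∉ M) (huv : u ≠ v) : OneRepeat ([u, v] ++ M ++ [w]) := by
  apply card_calc
  subst huw
  have h1 : insert u (insert v (insert u M.toFinset)) = insert v (insert u M.toFinset) := by
    apply Finset.insert_eq_self.2; simp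
  rw [h1, Finset.card_insert_of_notMem (by simp [hv, Ne.symm huv]),
    Finset.card_insert_of_notMem (by simp [hu]), List.toFinset_card_of_nodup hM]

lemma shapeE {u v w : ℤ} {M : List ℤ} (hM : M.Nodup) (hvw : v = w) (hu : u ∉ M)
    (hv : v ∉ M) (huv : u ≠ v) : OneRepeat ([u, v] ++ M ++ [w]) := by
  apply card_calc
  subst hvw
  rw [Finset.insert_idem, Finset.card_insert_of_notMem (by simp [hu, huv]),
    Finset.card_insert_of_notMem (by simp [hv]), List.toFinset_card_of_nodup hM]

lemma nodup_shape {u v w : ℤ} {M : List ℤ} (hM : M.Nodup) (hu : u ∉ M) (hv : v ∉ M)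
    (hw : w ∉ M) (huv : u ≠ v) (huw : u ≠ w) (hvw : v ≠ w) : ([u, v] ++ M ++ [w]).Nodup := by
  simp [List.nodup_append, List.nodup_cons, List.Disjoint, hM]
  exact ⟨⟨huv, hu, huw⟩, ⟨hv, hvw⟩, fun a ha h => hw (h ▸ ha)⟩

lemma rep_cases {u v w : ℤ} {M : List ℤ} (hM : M.Nodup) (h : OneRepeat ([u, v] ++ M ++ [w])) :
    u ∈ M ∨ v ∈ M ∨ w ∈ M ∨ u = v ∨ u = w ∨ v = w := by
  by_contra hc
  push_neg at hc
  obtain ⟨h1, h2, h3, h4, h5, h6⟩ := hc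
  have hnd := nodup_shape hM h1 h2 h3 h4 h5 h6
  rw [OneRepeat, List.toFinset_card_of_nodup hnd] at h
  omega

lemma onerep_extend {u v w : ℤ} {B E1 E2 : List ℤ} (hE : (E1 ++ E2).Nodup)
    (hdisj : ∀ x ∈ E1 ++ E2, x ∉ ([u, v] ++ B ++ [w]))
    (h : OneRepeat ([u, v] ++ B ++ [w])) : OneRepeat ([u, v] ++ (E1 ++ B ++ E2) ++ [w]) := by
  have hset : ([u, v] ++ (E1 ++ B ++ E2) ++ [w]).toFinset
      = (E1 ++ E2).toFinset ∪ ([u, v] ++ B ++ [w]).toFinset := by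
    ext x; simp [List.toFinset_append]; tauto
  have hdis : Disjoint (E1 ++ E2).toFinset ([u, v] ++ B ++ [w]).toFinset := by
    rw [Finset.disjoint_left]
    intro x hx
    simp only [List.mem_toFinset] at *
    exact hdisj x hx
  have hcard : ([u, v] ++ (E1 ++ B ++ E2) ++ [w]).toFinset.card
      = (E1 ++ E2).length + ([u, v] ++ B ++ [w]).toFinset.card := by
    rw [hset, Finset.card_union_of_disjoint hdis, List.toFinset_card_of_nodup hE]
  have hlen : ([u, v] ++ (E1 ++ B ++ E2) ++ [w]).length
      = (E1 ++ E2).length + ([u, v] ++ B ++ [w]).length := by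
    simp [List.length_append]; omega
  rw [OneRepeat] at *
  omega

lemma pairwise_shape {u v w : ℤ} {M : List ℤ} (hM : M.Pairwise (· > ·))
    (h1 : ∀ x ∈ M, x < v) (h2 : ∀ x ∈ M, w < x) (huv : v < u) (hw : w < v) :
    ([u, v] ++ M ++ [w]).Pairwise (· > ·) := by
  rw [List.pairwise_append]
  refine ⟨?_, List.pairwise_singleton _ _, ?_⟩
  · rw [List.pairwise_append]
    refine ⟨?_, hM, ?_⟩
    · simp [huv]
    · intro a ha b hb
      simp only [List.mem_cons, List.mem_singleton, List.not_mem_nil, or_false] at ha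
      rcases ha with rfl | rfl
      · exact lt_trans (h1 b hb) huv
      · exact h1 b hb
  · intro a ha b hb
    simp only [List.mem_singleton, List.not_mem_nil, or_false] at hb
    subst hb
    simp only [List.mem_append, List.mem_cons, List.mem_singleton, List.not_mem_nil,
      or_false] at ha
    rcases ha with (rfl | rfl) | ha
    · exact lt_trans hw huv
    · exact hw
    · exact h2 a ha

lemma decomp {u v w : ℤ} {B : List ℤ} (h : ([u, v] ++ B ++ [w]).Pairwise (· > ·)) :
    B.Pairwise (· > ·) ∧ (∀ b ∈ B, b < v) ∧ (∀ b ∈ B, w < b) ∧ w < v ∧ v < u := by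
  rw [List.pairwise_append] at h
  obtain ⟨h1, -, h2⟩ := h
  rw [List.pairwise_append] at h1
  obtain ⟨h3, h4, h5⟩ := h1
  refine ⟨h4, fun b hb => h5 v (by simp) b hb, fun b hb => h2 b (by simp [hb]) w (by simp),
    h2 v (by simp) w (by simp), by simpa using h3⟩

lemma strong_bound {y : ℤ} {m n : ℕ} {B : List ℤ} (hm : 0 < m)
    (hn : B.length = n) (hnd : B.Nodup)
    (hdim : (3 * n + 2 : ℤ) = 2 * y + m - 1)
    (hU : ∀ s : ℕ, 1 ≤ s → (s : ℤ) ≤ 2 * y + m - 1 →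
      OneRepeat ([y + 2 * m - s, y - s] ++ B ++ [-y + s])) :
    ∀ b ∈ B, -y + m < b := by
  by_contra hcon
  push_neg at hcon
  obtain ⟨b₀, hb₀, hb₀le⟩ := hcon
  classical
  set U : Finset (ℤ × ℕ) := B.toFinset ×ˢ ({0, 1, 2} : Finset ℕ) ∪ {((0:ℤ), 3), ((0:ℤ), 4)}
    with hU_def
  set S : Finset (ℤ × ℕ) := U \ {(b₀, 0)} with hS_def
  set f : ℕ → ℤ × ℕ := fun s =>
    if y + 2 * m - s ∈ B then (y + 2 * m - s, 0)
    else if y - s ∈ B then (y - s, 1)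
    else if -y + s ∈ B then (-y + s, 2)
    else if (s : ℤ) = y + m then ((0:ℤ), 3)
    else ((0:ℤ), 4) with hf_def
  set T : Finset ℕ := Finset.Icc 1 (3 * n + 2) with hT_def
  have key : ∀ s ∈ T, (y + 2 * m - s ∈ B ∨ y - s ∈ B ∨ -y + s ∈ B ∨
      (s : ℤ) = y + m ∨ (s : ℤ) = y) := by
    intro s hs
    rw [hT_def, Finset.mem_Icc] at hs
    have h1 := hU s hs.1 (by omega)
    have h2 := rep_cases hnd h1
    rcases h2 with h | h | h | h | h | h
    · exact Or.inl h
    · exact Or.inr (Or.inl h)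
    · exact Or.inr (Or.inr (Or.inl h))
    · exfalso; omega
    · exact Or.inr (Or.inr (Or.inr (Or.inl (by omega))))
    · exact Or.inr (Or.inr (Or.inr (Or.inr (by omega))))
  have hmaps : ∀ s ∈ T, f s ∈ S := by
    intro s hs
    rw [hT_def, Finset.mem_Icc] at hs
    rw [hS_def, Finset.mem_sdiff, hU_def]
    simp only [hf_def]
    split_ifs with h1 h2 h3 h4
    · constructor
      · apply Finset.mem_union_left
        rw [Finset.mem_product]
        exact ⟨List.mem_toFinset.2 h1, by simp⟩
      · simp only [Finset.mem_singleton, Prod.mk.injEq, not_and]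
        intro hval
        exfalso
        have hs' : (s : ℤ) = y + 2 * m - b₀ := by omega
        omega
    · exact ⟨Finset.mem_union_left _ (Finset.mem_product.2 ⟨List.mem_toFinset.2 h2, by simp⟩),
        by simp⟩
    · exact ⟨Finset.mem_union_left _ (Finset.mem_product.2 ⟨List.mem_toFinset.2 h3, by simp⟩),
        by simp⟩
    · exact ⟨Finset.mem_union_right _ (by simp), by simp⟩
    · exact ⟨Finset.mem_union_right _ (by simp), by simp⟩
  have hinj : Set.InjOn f ↑T := by
    intro s hs s' hs' hff
    simp only [Finset.coe_Icc, Set.mem_Icc, hT_def] at hs hs'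
    have ks := key s (by rw [hT_def, Finset.mem_Icc]; omega)
    have ks' := key s' (by rw [hT_def, Finset.mem_Icc]; omega)
    simp only [hf_def] at hff
    split_ifs at hff with h1 h2 h3 h4 h1' h2' h3' h4' <;>
      simp only [Prod.mk.injEq] at hff <;> try omega
    all_goals (have e1 : (s:ℤ) = y := by tauto); (have e2 : (s':ℤ) = y := by tauto); omega
  have hcard1 : T.card = 3 * n + 2 := by rw [hT_def, Nat.card_Icc]; omega
  have hb₀U : (b₀, 0) ∈ U := by
    rw [hU_def]
    exact Finset.mem_union_left _ (Finset.mem_product.2 ⟨List.mem_toFinset.2 hb₀, by simp⟩)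
  have hcardS : S.card = U.card - 1 := by
    rw [hS_def, Finset.card_sdiff_of_subset (by simp [hb₀U])]
    simp
  have hcardU : U.card ≤ 3 * n + 2 := by
    calc U.card ≤ (B.toFinset ×ˢ ({0,1,2} : Finset ℕ)).card
          + ({((0:ℤ),3),((0:ℤ),4)} : Finset (ℤ×ℕ)).card := Finset.card_union_le _ _
    _ ≤ 3 * n + 2 := by
        rw [Finset.card_product, List.toFinset_card_of_nodup hnd, hn]
        have h2 : ({((0:ℤ),3),((0:ℤ),4)} : Finset (ℤ×ℕ)).card ≤ 2 := Finset.card_le_two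
        have h3 : ({0,1,2} : Finset ℕ).card ≤ 3 := by decide
        nlinarith
  have := Finset.card_le_card_of_injOn f hmaps hinj
  omega

lemma elong_main (m : ℕ) (y : ℤ) (B : List ℤ) (hm : 0 < m)
    (hUl : IsUlrich3 [y + 2 * m, y] B [-y])
    (hd : (dim3 [y + 2 * m, y] B [-y] : ℤ) = 2 * y + m - 1) :
    IsUlrich3 [y + 5 * m, y + 3 * m] (elongB y m B) [-(y + 3 * m)] ∧
      (dim3 [y + 5 * m, y + 3 * m] (elongB y m B) [-(y + 3 * m)] : ℤ)
        = 2 * (y + 3 * m) + m - 1 := by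
  obtain ⟨-, -, hsd, hev⟩ := hUl
  set n := B.length with hn_def
  have hdim : (3 * (n : ℤ) + 2) = 2 * y + m - 1 := by
    rw [dim_eq] at hd; push_cast at hd ⊢; omega
  -- basic structure of P
  have hp : ([y + 2 * m - 0, y - 0] ++ B ++ [-y + 0]).Pairwise (· > ·) := by
    rw [StrictDec, evolve_pair, List.Chain', List.isChain_iff_pairwise] at hsd
    exact hsd
  simp only [sub_zero, add_zero] at hp
  obtain ⟨hBp, hBhi, hBlo0, hwv, -⟩ := decomp hp
  have hy : 1 ≤ y := by omega
  have hBnd : B.Nodup := hBp.imp ne_of_gt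
  -- evolution of P in friendly form
  have hev' : ∀ s : ℕ, 1 ≤ s → (s : ℤ) ≤ 2 * y + m - 1 →
      OneRepeat ([y + 2 * m - s, y - s] ++ B ++ [-y + s]) := by
    intro s h1 h2
    have h3 : s ≤ dim3 [y + 2 * m, y] B [-y] := by rw [dim_eq]; omega
    have := hev s h1 h3
    rwa [evolve_pair] at this
  -- the strong lower bound on B
  have hBlo : ∀ b ∈ B, -y + m < b := strong_bound hm rfl hBnd hdim hev'
  -- membership helpers
  have hnotB : ∀ x : ℤ, (x ≤ -y + m ∨ y ≤ x) → x ∉ B := by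
    intro x hx hmem
    have := hBhi x hmem
    have := hBlo x hmem
    omega
  have hmE : ∀ x : ℤ, x ∈ elongB y m B ↔
      ((y + 3 * m - 1 - m < x ∧ x ≤ y + 3 * m - 1) ∨ x ∈ B ∨
        (-y - m - m < x ∧ x ≤ -y - m)) := by
    intro x
    rw [elongB_eq]
    simp only [List.mem_append, mem_blk]
    tauto
  have hnotM : ∀ x : ℤ, (x ≤ y + 2 * m - 1 ∨ y + 3 * m ≤ x) → (x ≤ -y + m ∨ y ≤ x) →
      (x ≤ -y - 2 * m ∨ -y - m + 1 ≤ x) → x ∉ elongB y m B := by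
    intro x h1 h2 h3 hx
    rcases (hmE x).1 hx with h | h | h
    · omega
    · exact hnotB x h2 h
    · omega
  -- pairwise of elongB
  have hMp : (elongB y m B).Pairwise (· > ·) := by
    rw [elongB_eq]
    refine List.pairwise_append.2 ⟨List.pairwise_append.2 ⟨pairwise_blk, hBp, ?_⟩,
      pairwise_blk, ?_⟩
    · intro a ha b hb
      have h1 := mem_blk.1 ha
      have h2 := hBhi b hb
      simp only [gt_iff_lt]; omega
    · intro a ha b hb
      have h2 := mem_blk.1 hb
      rcases List.mem_append.1 ha with h | h
      · have h1 := mem_blk.1 h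
        simp only [gt_iff_lt]; omega
      · have h1 := hBlo0 a h
        simp only [gt_iff_lt]; omega
  have hMnd : (elongB y m B).Nodup := hMp.imp ne_of_gt
  constructor
  · refine ⟨by simp, by simp, ?_, ?_⟩
    · -- strictly decreasing
      rw [StrictDec, evolve_pair, List.Chain', List.isChain_iff_pairwise]
      simp only [sub_zero, add_zero]
      refine pairwise_shape hMp ?_ ?_ (by omega) (by omega)
      · intro x hx
        rcases (hmE x).1 hx with h | h | h
        · omega
        · have := hBhi x h; omega
        · omega
      · intro x hx
        rcases (hmE x).1 hx with h | h | h
        · omega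
        · have := hBlo0 x h; omega
        · omega
    · -- evolution
      intro t ht1 ht2
      rw [dim_eq, length_elongB] at ht2
      have ht1' : 1 ≤ (t : ℤ) := by exact_mod_cast ht1
      have htz : (t : ℤ) ≤ 2 * y + 7 * m - 1 := by
        have h2' : (t : ℤ) ≤ 3 * ((m : ℤ) + n + m) + 2 := by exact_mod_cast ht2
        omega
      rw [evolve_pair]
      have hsplit : (t:ℤ) ≤ m ∨ ((m:ℤ) < t ∧ (t:ℤ) ≤ 2*m) ∨ ((2*m:ℤ) < t ∧ (t:ℤ) ≤ 3*m) ∨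
          ((3*m:ℤ) < t ∧ (t:ℤ) ≤ 2*y+4*m-1) ∨ (2*y+4*m-1 < (t:ℤ) ∧ (t:ℤ) ≤ 2*y+5*m-1) ∨
          (2*y+5*m-1 < (t:ℤ) ∧ (t:ℤ) ≤ 2*y+6*m-1) ∨ (2*y+6*m-1 < (t:ℤ)) := by omega
      rcases hsplit with h | h | h | h | h | h | h
      · -- a₂ meets the first inserted block
        exact shapeA hMnd ((hmE _).2 (Or.inl ⟨by omega, by omega⟩))
          (hnotM _ (by omega) (by omega) (by omega))
          (hnotM _ (by omega) (by omega) (by omega)) (by omega)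
      · -- c meets the second inserted block
        exact shapeC hMnd ((hmE _).2 (Or.inr (Or.inr ⟨by omega, by omega⟩)))
          (hnotM _ (by omega) (by omega) (by omega))
          (hnotM _ (by omega) (by omega) (by omega)) (by omega)
      · -- a₁ meets the first inserted block
        exact shapeB hMnd ((hmE _).2 (Or.inl ⟨by omega, by omega⟩))
          (hnotM _ (by omega) (by omega) (by omega))
          (hnotM _ (by omega) (by omega) (by omega)) (by omega)
      · -- middle range : inherited from P
        set s : ℕ := t - 3 * m with hs_def
        have h3m : 3 * m < t := by omega
        have hsz : (s : ℤ) = (t : ℤ) - 3 * m := by omega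
        have hro := hev' s (by omega) (by omega)
        rw [show (y + 2 * (m:ℤ) - s : ℤ) = y + 5 * m - t from by omega,
          show (y - (s:ℤ) : ℤ) = y + 3 * m - t from by omega,
          show (-y + (s:ℤ) : ℤ) = -(y + 3 * m) + t from by omega] at hro
        rw [elongB_eq]
        refine onerep_extend ?_ ?_ hro
        · refine List.Nodup.append nodup_blk nodup_blk ?_
          intro a ha hb
          have h1 := mem_blk.1 ha
          have h2 := mem_blk.1 hb
          omega
        · intro x hx hxm
          have hxb : (y + 3*m - 1 - m < x ∧ x ≤ y + 3*m - 1) ∨ (-y - m - m < x ∧ x ≤ -y - m) := by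
            rcases List.mem_append.1 hx with hh | hh
            · exact Or.inl (mem_blk.1 hh)
            · exact Or.inr (mem_blk.1 hh)
          simp only [List.mem_append, List.mem_cons, List.mem_singleton,
            List.not_mem_nil, or_false] at hxm
          rcases hxm with ((rfl | rfl) | hB) | rfl
          · omega
          · omega
          · have := hBhi x hB
            have := hBlo x hB
            omega
          · omega
      · -- a₂ meets the second inserted block
        exact shapeA hMnd ((hmE _).2 (Or.inr (Or.inr ⟨by omega, by omega⟩)))
          (hnotM _ (by omega) (by omega) (by omega))
          (hnotM _ (by omega) (by omega) (by omega)) (by omega)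
      · -- c meets the first inserted block
        exact shapeC hMnd ((hmE _).2 (Or.inl ⟨by omega, by omega⟩))
          (hnotM _ (by omega) (by omega) (by omega))
          (hnotM _ (by omega) (by omega) (by omega)) (by omega)
      · -- a₁ meets the second inserted block
        exact shapeB hMnd ((hmE _).2 (Or.inr (Or.inr ⟨by omega, by omega⟩)))
          (hnotM _ (by omega) (by omega) (by omega))
          (hnotM _ (by omega) (by omega) (by omega)) (by omega)
  · rw [dim_eq, length_elongB]
    push_cast
    omega

lemma Fm_ulrich (m : ℕ) (hm : 0 < m) :
    IsUlrich3 [(m:ℤ) + 2 * m, (m:ℤ)] (Fb m) [-(m:ℤ)] := by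
  have hmF : ∀ x : ℤ, x ∈ Fb m ↔ (0 < x ∧ x ≤ (m:ℤ) - 1) := by
    intro x
    rw [Fb_eq, mem_blk]
    omega
  have hFp : (Fb m).Pairwise (· > ·) := Fb_eq m ▸ pairwise_blk
  have hFnd : (Fb m).Nodup := hFp.imp ne_of_gt
  refine ⟨by simp, by simp, ?_, ?_⟩
  · rw [StrictDec, evolve_pair, List.Chain', List.isChain_iff_pairwise]
    simp only [sub_zero, add_zero]
    refine pairwise_shape hFp ?_ ?_ (by omega) (by omega)
    · intro x hx; have := (hmF x).1 hx; omega
    · intro x hx; have := (hmF x).1 hx; omega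
  · intro t ht1 ht2
    rw [dim_eq] at ht2
    have hlF : (Fb m).length = m - 1 := by rw [Fb_eq, length_blk]
    rw [hlF] at ht2
    have ht1' : 1 ≤ (t : ℤ) := by exact_mod_cast ht1
    have htz : (t : ℤ) ≤ 3 * m - 1 := by omega
    rw [evolve_pair]
    have hsplit : (t:ℤ) ≤ (m:ℤ) - 1 ∨ (t:ℤ) = m ∨ ((m:ℤ) < t ∧ (t:ℤ) ≤ 2*m-1) ∨
        (t:ℤ) = 2*m ∨ (2*(m:ℤ) < t ∧ (t:ℤ) ≤ 3*m-1) := by omega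
    rcases hsplit with h | h | h | h | h
    · exact shapeA hFnd ((hmF _).2 ⟨by omega, by omega⟩)
        (fun hc => by have := (hmF _).1 hc; omega)
        (fun hc => by have := (hmF _).1 hc; omega) (by omega)
    · exact shapeE hFnd (by omega)
        (fun hc => by have := (hmF _).1 hc; omega)
        (fun hc => by have := (hmF _).1 hc; omega) (by omega)
    · exact shapeC hFnd ((hmF _).2 ⟨by omega, by omega⟩)
        (fun hc => by have := (hmF _).1 hc; omega)
        (fun hc => by have := (hmF _).1 hc; omega) (by omega)
    · exact shapeD hFnd (by omega)
        (fun hc => by have := (hmF _).1 hc; omega)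
        (fun hc => by have := (hmF _).1 hc; omega) (by omega)
    · exact shapeB hFnd ((hmF _).2 ⟨by omega, by omega⟩)
        (fun hc => by have := (hmF _).1 hc; omega)
        (fun hc => by have := (hmF _).1 hc; omega) (by omega)

lemma yk_succ (m k : ℕ) : yk m (k + 1) = yk m k + 3 * m := by
  simp only [yk]; push_cast; ring

theorem stmt18 :
    (∀ (m : ℕ) (y : ℤ) (B : List ℤ), 0 < m →
      IsUlrich3 [y + 2 * m, y] B [-y] →
      (dim3 [y + 2 * m, y] B [-y] : ℤ) = 2 * y + m - 1 →
      IsUlrich3 [y + 5 * m, y + 3 * m] (elongB y m B) [-(y + 3 * m)] ∧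
        (dim3 [y + 5 * m, y + 3 * m] (elongB y m B) [-(y + 3 * m)] : ℤ)
          = 2 * (y + 3 * m) + m - 1) ∧
    (∀ (m k : ℕ), 0 < m →
      IsUlrich3 (EkA m k) (EkB m k) (EkC m k) ∧ (EkB m k).length = 2 * m * k + m - 1) := by
  refine ⟨fun m y B hm h1 h2 => elong_main m y B hm h1 h2, ?_⟩
  intro m k hm
  induction k with
  | zero =>
    have h0 : yk m 0 = (m : ℤ) := by simp [yk]
    constructor
    · show IsUlrich3 [yk m 0 + 2 * m, yk m 0] (Fb m) [-(yk m 0)]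
      rw [h0]
      exact Fm_ulrich m hm
    · show (Fb m).length = 2 * m * 0 + m - 1
      rw [Fb_eq, length_blk]
      omega
  | succ k ih =>
    obtain ⟨hU, hlen⟩ := ih
    have hd : (dim3 [yk m k + 2 * m, yk m k] (EkB m k) [-(yk m k)] : ℤ)
        = 2 * yk m k + m - 1 := by
      rw [dim_eq, hlen]
      have h1 : (1:ℕ) ≤ 2 * m * k + m := le_trans hm (Nat.le_add_left m (2 * m * k))
      have hc : ((2 * m * k + m - 1 : ℕ) : ℤ) = 2 * (m:ℤ) * k + m - 1 := by
        rw [Nat.cast_sub h1]; push_cast; ring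
      rw [show ((3 * (2 * m * k + m - 1) + 2 : ℕ) : ℤ)
          = 3 * ((2 * m * k + m - 1 : ℕ) : ℤ) + 2 from by push_cast; ring, hc]
      simp only [yk]
      ring
    have hstep := elong_main m (yk m k) (EkB m k) hm hU hd
    have hA : EkA m (k + 1) = [yk m k + 5 * m, yk m k + 3 * m] := by
      simp only [EkA, yk_succ, List.cons.injEq, and_true]
      ring
    have hC : EkC m (k + 1) = [-(yk m k + 3 * m)] := by
      simp only [EkC, yk_succ]
    constructor
    · rw [hA, hC]
      show IsUlrich3 _ (elongB (yk m k) m (EkB m k)) _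
      exact hstep.1
    · show (elongB (yk m k) m (EkB m k)).length = 2 * m * (k + 1) + m - 1
      rw [length_elongB, hlen]
      have hq : 2 * m * (k + 1) = 2 * m * k + 2 * m := by ring
      rw [hq]
      obtain ⟨q, hq2⟩ : ∃ q, q = 2 * m * k := ⟨_, rfl⟩
      rw [← hq2]
      omega
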